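/- arXiv:1410.0405 — 7 statements merged into one kernel-verified Lean document; each statement's English description precedes it below -/
import Mathlib

section
/- Let Ω ⊂ ℝⁿ be a compact set, let f : ℝⁿ → ℝⁿ, q : ℝⁿ → ℝ, and Σ : ℝⁿ → ℝ^{n×n} be functions such that q(x) > 0 for all x ∈ Ω and Σ(x) is a symmetric positive semidefinite matrix for all x ∈ Ω, and let λ > 0. Define the operator L(Ψ)(x) = f(x)ᵀ∇Ψ(x) + (1/2)Tr(∇²Ψ(x)Σ(x)). Suppose Ψ* and Ψ_l are twice continuously differentiable on anuintl open set containing Ω, that (1/λ)q(x)Ψ*(x) − L(Ψ*)(x) = 0 for all x in the interior of Ω, that (1/λ)q(x)Ψ_l(x) − L(Ψ_l)(x) ≤ 0 for all x in the interior of Ω, and that Ψ_l(x) ≤ Ψ*(x) for all x on the boundary ∂Ω. Then Ψ_l(x) ≤ Ψ*(x) for all x ∈ Ω. (Theorem 4, classical-solution version: a subsolution of the relaxed linear HJB PDE is a pointwise lower bound of the exact solution.) -/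
open Matrix Filter Topology

/-- Gradient of a scalar function on `ℝⁿ`, as a vector of directional derivatives. -/
noncomputable def grad {n : ℕ} (Ψ : (Fin n → ℝ) → ℝ) (x : Fin n → ℝ) : Fin n → ℝ :=
  fun i => fderiv ℝ Ψ x (Pi.single i 1)

/-- Hessian matrix of a scalar function on `ℝⁿ`. -/
noncomputable def hess {n : ℕ} (Ψ : (Fin n → ℝ) → ℝ) (x : Fin n → ℝ) :
    Matrix (Fin n) (Fin n) ℝ :=
  Matrix.of fun i j => fderiv ℝ (fun y => fderiv ℝ Ψ y (Pi.single j 1)) x (Pi.single i 1)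

/-- The linear HJB operator `L(Ψ)(x) = f(x)ᵀ∇Ψ(x) + (1/2) Tr(∇²Ψ(x) Σ(x))`. -/
noncomputable def hjbL {n : ℕ} (f : (Fin n → ℝ) → Fin n → ℝ)
    (Sig : (Fin n → ℝ) → Matrix (Fin n) (Fin n) ℝ)
    (Ψ : (Fin n → ℝ) → ℝ) (x : Fin n → ℝ) : ℝ :=
  f x ⬝ᵥ grad Ψ x + (1 / 2) * (hess Ψ x * Sig x).trace

lemma psd_trace_nonneg {n : ℕ} {P : Matrix (Fin n) (Fin n) ℝ} (hP : P.PosSemidef) :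
    0 ≤ P.trace := by
  rw [Matrix.trace]
  apply Finset.sum_nonneg
  intro i _
  have := (Matrix.posSemidef_iff_dotProduct_mulVec.mp hP).2 (Pi.single i 1)
  simpa [dotProduct, Matrix.mulVec, Pi.single_apply, Matrix.diag] using this

lemma trace_mul_nonneg {n : ℕ} {M N : Matrix (Fin n) (Fin n) ℝ}
    (hM : M.PosSemidef) (hN : N.PosSemidef) : 0 ≤ (M * N).trace := by
  obtain ⟨B, hB⟩ : ∃ B : Matrix (Fin n) (Fin n) ℝ, N = Bᴴ * B := by
    open scoped MatrixOrder in
    obtain ⟨B, hB⟩ := CStarAlgebra.nonneg_iff_eq_star_mul_self.mp hN.nonneg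
    exact ⟨B, by rw [hB, star_eq_conjTranspose]⟩
  have h1 : (M * N).trace = (B * M * Bᴴ).trace := by
    rw [hB, ← mul_assoc, Matrix.trace_mul_cycle]
  rw [h1]
  exact psd_trace_nonneg (hM.mul_mul_conjTranspose_same B)

lemma snd_deriv_test {g φ : ℝ → ℝ} {a : ℝ}
    (hg : ∀ᶠ t in 𝓝 (0:ℝ), HasDerivAt g (φ t) t)
    (hφ : HasDerivAt φ a 0) (h0 : φ 0 = 0) (hmax : IsLocalMax g 0) : a ≤ 0 := by
  by_contra h
  push_neg at h
  -- eventually φ t > 0 for t > 0 small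
  have hs : Tendsto (slope φ 0) (𝓝[≠] 0) (𝓝 a) := hasDerivAt_iff_tendsto_slope.mp hφ
  have hpos : ∀ᶠ t in 𝓝[>] (0:ℝ), 0 < φ t := by
    have h1 : ∀ᶠ t in 𝓝[≠] (0:ℝ), 0 < slope φ 0 t :=
      hs (Ioi_mem_nhds h)
    have h2 : ∀ᶠ t in 𝓝[>] (0:ℝ), 0 < slope φ 0 t :=
      nhdsWithin_mono 0 (fun t ht => ne_of_gt ht) h1
    filter_upwards [h2, self_mem_nhdsWithin] with t ht ht'
    have hst : slope φ 0 t = φ t / t := by simp [slope_def_field, h0]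
    rw [hst] at ht
    have := mul_pos ht (show (0:ℝ) < t from ht')
    rwa [div_mul_cancel₀] at this
    exact ne_of_gt ht'
  have hmax' : ∀ᶠ t in 𝓝 (0:ℝ), g t ≤ g 0 := hmax
  obtain ⟨ε, hε, hball⟩ := Metric.eventually_nhds_iff_ball.mp (hg.and hmax')
  obtain ⟨u, hu, huball⟩ :=
    mem_nhdsGT_iff_exists_Ioc_subset.mp hpos
  set δ := min u (ε/2) with hδdef
  have hδ : 0 < δ := lt_min hu (by linarith)
  have hδIcc : ∀ t ∈ Set.Icc (0:ℝ) δ, t ∈ Metric.ball (0:ℝ) ε := by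
    intro t ht
    simp only [Metric.mem_ball, Real.dist_eq, sub_zero]
    rw [abs_of_nonneg ht.1]
    calc t ≤ δ := ht.2
      _ ≤ ε/2 := min_le_right _ _
      _ < ε := by linarith
  -- g strictly mono on Icc 0 δ
  have hmono : StrictMonoOn g (Set.Icc 0 δ) := by
    apply strictMonoOn_of_deriv_pos (convex_Icc _ _)
    · intro t ht
      exact ((hball t (hδIcc t ht)).1).continuousAt.continuousWithinAt
    · intro t ht
      rw [interior_Icc] at ht
      rw [((hball t (hδIcc t ⟨le_of_lt ht.1, le_of_lt ht.2⟩)).1).deriv]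
      exact huball ⟨ht.1, le_trans ht.2.le (min_le_left _ _)⟩
  have h1 : g 0 < g δ := hmono ⟨le_refl _, hδ.le⟩ ⟨hδ.le, le_refl _⟩ hδ
  have h2 : g δ ≤ g 0 := (hball δ (hδIcc δ ⟨hδ.le, le_refl _⟩)).2
  linarith

lemma hess_nonpos_at_localMax {n : ℕ} {u : (Fin n → ℝ) → ℝ} {x₀ : Fin n → ℝ}
    (hu : ContDiffAt ℝ 2 u x₀) (hmax : IsLocalMax u x₀) (v : Fin n → ℝ) :
    fderiv ℝ (fderiv ℝ u) x₀ v v ≤ 0 := by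
  set c : ℝ → (Fin n → ℝ) := fun t => x₀ + t • v with hc
  have hc0 : c 0 = x₀ := by simp [hc]
  have hcd : ∀ t : ℝ, HasDerivAt c v t := by
    intro t
    simpa [hc] using ((hasDerivAt_id t).smul_const v).const_add x₀
  have hcont : Continuous c := by fun_prop
  -- u differentiable eventually near x₀
  have hev : ∀ᶠ y in 𝓝 x₀, ContDiffAt ℝ 2 u y := hu.eventually (by simp)
  have hevd : ∀ᶠ y in 𝓝 x₀, DifferentiableAt ℝ u y := by
    filter_upwards [hev] with y hy
    exact hy.differentiableAt two_ne_zero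
  set g : ℝ → ℝ := fun t => u (c t) with hg
  set φ : ℝ → ℝ := fun t => fderiv ℝ u (c t) v with hφ
  have htend : Tendsto c (𝓝 0) (𝓝 x₀) := by
    rw [← hc0]; exact hcont.continuousAt
  have h1 : ∀ᶠ t in 𝓝 (0:ℝ), HasDerivAt g (φ t) t := by
    filter_upwards [htend.eventually hevd] with t ht
    exact ht.hasFDerivAt.comp_hasDerivAt t (hcd t)
  -- derivative of φ at 0
  have hdd : DifferentiableAt ℝ (fderiv ℝ u) x₀ :=
    (hu.fderiv_right (m := 1) (le_refl _)).differentiableAt one_ne_zero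
  have h2 : HasDerivAt φ (fderiv ℝ (fderiv ℝ u) x₀ v v) 0 := by
    have step : HasDerivAt (fun t => fderiv ℝ u (c t)) (fderiv ℝ (fderiv ℝ u) x₀ v) 0 := by
      have hdd' : HasFDerivAt (fderiv ℝ u) (fderiv ℝ (fderiv ℝ u) x₀) (c 0) := by
        rw [hc0]; exact hdd.hasFDerivAt
      exact hdd'.comp_hasDerivAt 0 (hcd 0)
    have := (ContinuousLinearMap.apply ℝ ℝ v).hasFDerivAt.comp_hasDerivAt 0 step
    exact this
  have h0 : φ 0 = 0 := by
    simp only [hφ, hc0]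
    rw [hmax.fderiv_eq_zero]
    simp
  have hgmax : IsLocalMax g 0 := by
    have hmax' : IsMaxFilter u (𝓝 (c 0)) (c 0) := by rw [hc0]; exact hmax
    exact hmax'.comp_tendsto (by rw [hc0]; exact htend)
  exact snd_deriv_test h1 h2 h0 hgmax

lemma clm_bilin_expand {n : ℕ} (B : (Fin n → ℝ) →L[ℝ] ((Fin n → ℝ) →L[ℝ] ℝ)) (v : Fin n → ℝ) :
    B v v = ∑ i, ∑ j, v i * v j * B (Pi.single i 1) (Pi.single j 1) := by
  have hv : v = ∑ i, v i • (Pi.single i 1 : Fin n → ℝ) := by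
    ext j
    simp [Pi.single_apply]
  have hB : B (∑ i, v i • (Pi.single i 1 : Fin n → ℝ))
      = ∑ i, v i • B (Pi.single i 1) := by
    rw [map_sum]
    exact Finset.sum_congr rfl fun i _ => map_smul B _ _
  conv_lhs => rw [hv, hB]
  rw [map_sum, Finset.sum_comm]
  refine Finset.sum_congr rfl fun j _ => ?_
  rw [ContinuousLinearMap.sum_apply]
  refine Finset.sum_congr rfl fun i _ => ?_
  rw [ContinuousLinearMap.smul_apply, _root_.map_smul]
  simp [mul_comm, mul_assoc, mul_left_comm]

lemma hess_entry {n : ℕ} {Ψ : (Fin n → ℝ) → ℝ} {x : Fin n → ℝ}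
    (h : ContDiffAt ℝ 2 Ψ x) (i j : Fin n) :
    fderiv ℝ (fun y => fderiv ℝ Ψ y (Pi.single j 1)) x (Pi.single i 1)
      = fderiv ℝ (fderiv ℝ Ψ) x (Pi.single i 1) (Pi.single j 1) := by
  have hdd : DifferentiableAt ℝ (fderiv ℝ Ψ) x :=
    (h.fderiv_right (m := 1) (le_refl _)).differentiableAt one_ne_zero
  rw [fderiv_clm_apply hdd (differentiableAt_const _)]
  simp

set_option maxHeartbeats 1000000 in
/-- Theorem 4 (classical-solution version): a classical subsolution of the relaxed linear
HJB PDE that lies below the exact solution on the boundary is a pointwise lower bound of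
the exact solution on all of `Ω`. -/
theorem hjb_subsolution_pointwise_lower_bound
    {n : ℕ} (Ω : Set (Fin n → ℝ)) (hΩ : IsCompact Ω)
    (f : (Fin n → ℝ) → Fin n → ℝ) (q : (Fin n → ℝ) → ℝ)
    (Sig : (Fin n → ℝ) → Matrix (Fin n) (Fin n) ℝ)
    (hq : ∀ x ∈ Ω, 0 < q x)
    (hSig : ∀ x ∈ Ω, (Sig x).PosSemidef)
    (lam : ℝ) (hlam : 0 < lam)
    (Ψstar Ψl : (Fin n → ℝ) → ℝ)
    (hΨstar : ∃ U : Set (Fin n → ℝ), IsOpen U ∧ Ω ⊆ U ∧ ContDiffOn ℝ 2 Ψstar U)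
    (hΨl : ∃ U : Set (Fin n → ℝ), IsOpen U ∧ Ω ⊆ U ∧ ContDiffOn ℝ 2 Ψl U)
    (hpde : ∀ x ∈ interior Ω,
      (1 / lam) * q x * Ψstar x - hjbL f Sig Ψstar x = 0)
    (hsub : ∀ x ∈ interior Ω,
      (1 / lam) * q x * Ψl x - hjbL f Sig Ψl x ≤ 0)
    (hbdry : ∀ x ∈ frontier Ω, Ψl x ≤ Ψstar x) :
    ∀ x ∈ Ω, Ψl x ≤ Ψstar x := by
  obtain ⟨U1, hU1o, hΩU1, hst1⟩ := hΨstar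
  obtain ⟨U2, hU2o, hΩU2, hl2⟩ := hΨl
  set U : Set (Fin n → ℝ) := U1 ∩ U2 with hUdef
  have hUo : IsOpen U := hU1o.inter hU2o
  have hΩU : Ω ⊆ U := Set.subset_inter hΩU1 hΩU2
  have hstU : ContDiffOn ℝ 2 Ψstar U := hst1.mono Set.inter_subset_left
  have hlU : ContDiffOn ℝ 2 Ψl U := hl2.mono Set.inter_subset_right
  set u : (Fin n → ℝ) → ℝ := fun y => Ψl y - Ψstar y with hudef
  have huU : ContDiffOn ℝ 2 u U := hlU.sub hstU
  have hucont : ContinuousOn u Ω := (huU.continuousOn).mono hΩU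
  rcases Ω.eq_empty_or_nonempty with hΩe | hne
  · intro x hx; rw [hΩe] at hx; exact absurd hx (Set.notMem_empty x)
  obtain ⟨x₀, hx₀Ω, hx₀max⟩ := hΩ.exists_isMaxOn hne hucont
  suffices hkey : u x₀ ≤ 0 by
    intro x hx
    have h1 : u x ≤ u x₀ := hx₀max hx
    simp only [hudef] at h1 hkey
    linarith
  have hx₀cl : x₀ ∈ interior Ω ∪ frontier Ω := by
    rw [← closure_eq_interior_union_frontier, hΩ.isClosed.closure_eq]
    exact hx₀Ω
  rcases hx₀cl with hx₀int | hx₀fr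
  swap
  · have := hbdry x₀ hx₀fr
    simp only [hudef]; linarith
  -- interior case
  have hx₀U : x₀ ∈ U := hΩU hx₀Ω
  have hUnhds : U ∈ 𝓝 x₀ := hUo.mem_nhds hx₀U
  have hstAt : ContDiffAt ℝ 2 Ψstar x₀ := hstU.contDiffAt hUnhds
  have hlAt : ContDiffAt ℝ 2 Ψl x₀ := hlU.contDiffAt hUnhds
  have huAt : ContDiffAt ℝ 2 u x₀ := huU.contDiffAt hUnhds
  have hloc : IsLocalMax u x₀ :=
    hx₀max.isLocalMax (mem_interior_iff_mem_nhds.mp hx₀int)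
  have hfd0 : fderiv ℝ u x₀ = 0 := hloc.fderiv_eq_zero
  -- eventual differentiability
  have hevdiff : ∀ᶠ y in 𝓝 x₀, DifferentiableAt ℝ Ψl y ∧ DifferentiableAt ℝ Ψstar y := by
    filter_upwards [hUo.mem_nhds_iff.mpr hx₀U] with y hy
    exact ⟨(hlU.contDiffAt (hUo.mem_nhds hy)).differentiableAt two_ne_zero,
      (hstU.contDiffAt (hUo.mem_nhds hy)).differentiableAt two_ne_zero⟩
  have hfdu : fderiv ℝ u =ᶠ[𝓝 x₀] fun y => fderiv ℝ Ψl y - fderiv ℝ Ψstar y := by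
    filter_upwards [hevdiff] with y hy
    exact fderiv_sub hy.1 hy.2
  have hfdux₀ : fderiv ℝ u x₀ = fderiv ℝ Ψl x₀ - fderiv ℝ Ψstar x₀ := by
    have h := hevdiff.self_of_nhds
    exact fderiv_sub h.1 h.2
  -- gradients equal
  have hgrad : grad Ψl x₀ = grad Ψstar x₀ := by
    funext i
    have : fderiv ℝ u x₀ (Pi.single i 1) = 0 := by rw [hfd0]; simp
    rw [hfdux₀] at this
    simp only [ContinuousLinearMap.sub_apply] at this
    simp only [grad]
    linarith
  -- second derivative split
  have hddl : DifferentiableAt ℝ (fderiv ℝ Ψl) x₀ :=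
    (hlAt.fderiv_right (m := 1) (le_refl _)).differentiableAt one_ne_zero
  have hdds : DifferentiableAt ℝ (fderiv ℝ Ψstar) x₀ :=
    (hstAt.fderiv_right (m := 1) (le_refl _)).differentiableAt one_ne_zero
  have hBsplit : fderiv ℝ (fderiv ℝ u) x₀
      = fderiv ℝ (fderiv ℝ Ψl) x₀ - fderiv ℝ (fderiv ℝ Ψstar) x₀ := by
    rw [hfdu.fderiv_eq]
    exact fderiv_sub hddl hdds
  have hhess : hess Ψl x₀ - hess Ψstar x₀
      = Matrix.of fun i j => fderiv ℝ (fderiv ℝ u) x₀ (Pi.single i 1) (Pi.single j 1) := by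
    ext i j
    simp only [Matrix.sub_apply, hess, Matrix.of_apply]
    rw [hess_entry hlAt i j, hess_entry hstAt i j, hBsplit]
    simp
  have hBnp : ∀ v, fderiv ℝ (fderiv ℝ u) x₀ v v ≤ 0 := fun v =>
    hess_nonpos_at_localMax huAt hloc v
  have hBsymm : ∀ v w, fderiv ℝ (fderiv ℝ u) x₀ v w = fderiv ℝ (fderiv ℝ u) x₀ w v := fun v w =>
    (huAt.isSymmSndFDerivAt (by simp [minSmoothness_of_isRCLikeNormedField])).eq v w
  set M : Matrix (Fin n) (Fin n) ℝ :=
    Matrix.of fun i j => -(fderiv ℝ (fderiv ℝ u) x₀ (Pi.single i 1) (Pi.single j 1)) with hMdef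
  have hMpsd : M.PosSemidef := by
    rw [Matrix.posSemidef_iff_dotProduct_mulVec]
    constructor
    · ext i j
      simp only [Matrix.conjTranspose_apply, hMdef, Matrix.of_apply, star_trivial]
      rw [hBsymm]
    · intro x
      have hexp := clm_bilin_expand (fderiv ℝ (fderiv ℝ u) x₀) x
      have hdp : dotProduct (star x) (M *ᵥ x) = -(fderiv ℝ (fderiv ℝ u) x₀ x x) := by
        simp only [star_trivial, dotProduct, Matrix.mulVec, hMdef, Matrix.of_apply]
        rw [hexp, ← Finset.sum_neg_distrib]
        refine Finset.sum_congr rfl fun i _ => ?_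
        rw [← Finset.sum_neg_distrib]
        rw [Finset.mul_sum]
        refine Finset.sum_congr rfl fun j _ => ?_
        ring
      rw [hdp]
      linarith [hBnp x]
  -- trace term nonpositive
  have htr : ((hess Ψl x₀ - hess Ψstar x₀) * Sig x₀).trace ≤ 0 := by
    have h1 : hess Ψl x₀ - hess Ψstar x₀ = -M := by
      rw [hhess]; ext i j; simp [hMdef]
    rw [h1]
    have := trace_mul_nonneg hMpsd (hSig x₀ hx₀Ω)
    rw [Matrix.neg_mul, Matrix.trace_neg]
    linarith
  -- combine
  have hq0 : 0 < q x₀ := hq x₀ hx₀Ω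
  have hpde0 := hpde x₀ hx₀int
  have hsub0 := hsub x₀ hx₀int
  have hkey2 : (1/lam) * q x₀ * (u x₀) ≤ hjbL f Sig Ψl x₀ - hjbL f Sig Ψstar x₀ := by
    simp only [hudef]; nlinarith [hpde0, hsub0]
  have hLdiff : hjbL f Sig Ψl x₀ - hjbL f Sig Ψstar x₀
      = (1/2) * ((hess Ψl x₀ - hess Ψstar x₀) * Sig x₀).trace := by
    simp only [hjbL, hgrad]
    rw [Matrix.sub_mul, Matrix.trace_sub]
    ring
  rw [hLdiff] at hkey2
  by_contra hcon
  push_neg at hcon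
  have hpos : 0 < 1/lam * q x₀ := by positivity
  nlinarith [mul_pos hpos hcon, htr, hkey2]
end

section
/- Let Ω ⊂ ℝⁿ be a compact set, let f : ℝⁿ → ℝⁿ, q : ℝⁿ → ℝ, and Σ : ℝⁿ → ℝ^{n×n} be functions such that q(x) > 0 for all x ∈ Ω and Σ(x) is a symmetric positive semidefinite matrix for all x ∈ Ω, and let λ > 0. Define the operator L(Ψ)(x) = f(x)ᵀ∇Ψ(x) + (1/2)Tr(∇²Ψ(x)Σ(x)). Suppose Ψ* and Ψ_u are twice continuously differentiable on an open set containing Ω, that (1/λ)q(x)Ψ*(x) − L(Ψ*)(x) = 0 for all x in the interior of Ω, that (1/λ)q(x)Ψ_u(x) − L(Ψ_u)(x) ≥ 0 for all x in the interior of Ω, and that Ψ_u(x) ≥ Ψ*(x) for all x on the boundary ∂Ω. Then Ψ_u(x) ≥ Ψ*(x) for all x ∈ Ω. (Theorem 5, classical-solution version: a supersolution of the relaxed linear HJB PDE is a pointwise upper bound of the exact solution.) -/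
open Matrix Filter Topology Set

/-- Any continuous linear functional on `ℝⁿ` is determined by its values on basis vectors. -/
lemma clm_apply_eq_sum {n : ℕ} (φ : (Fin n → ℝ) →L[ℝ] ℝ) (v : Fin n → ℝ) :
    φ v = ∑ i, v i * φ (Pi.single i 1) := by
  have hv : v = ∑ i, v i • (Pi.single i 1 : Fin n → ℝ) := by
    ext j
    simp [Finset.sum_apply, Pi.single_apply]
  conv_lhs => rw [hv]
  simp [map_sum]

/-- 1D second-derivative test at a local max. -/
lemma deriv2_nonpos_of_isLocalMax {g : ℝ → ℝ} {s : Set ℝ}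
    (hs : IsOpen s) (h0 : (0:ℝ) ∈ s) (hg : ContDiffOn ℝ 2 g s)
    (hmax : IsLocalMax g 0) : deriv (deriv g) 0 ≤ 0 := by
  by_contra hc
  push_neg at hc
  have hg1 : ContDiffOn ℝ 1 (deriv g) s := hg.deriv_of_isOpen hs (by norm_num)
  have hd0 : deriv g 0 = 0 := hmax.deriv_eq_zero
  have hdd : HasDerivAt (deriv g) (deriv (deriv g) 0) 0 :=
    ((hg1.contDiffAt (hs.mem_nhds h0)).differentiableAt one_ne_zero).hasDerivAt
  have hten : Tendsto (slope (deriv g) 0) (𝓝[≠] (0:ℝ)) (𝓝 (deriv (deriv g) 0)) :=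
    hasDerivAt_iff_tendsto_slope.mp hdd
  have hev : ∀ᶠ t in 𝓝[≠] (0:ℝ), 0 < slope (deriv g) 0 t :=
    hten.eventually (eventually_gt_nhds hc)
  have hev' : ∀ᶠ t in 𝓝[>] (0:ℝ), 0 < deriv g t := by
    have h1 : ∀ᶠ t in 𝓝[>] (0:ℝ), 0 < slope (deriv g) 0 t :=
      hev.filter_mono (nhdsWithin_mono 0 (fun t ht => ne_of_gt ht))
    filter_upwards [h1, self_mem_nhdsWithin] with t ht ht'
    have hslope : slope (deriv g) 0 t = deriv g t / t := by
      simp [slope_def_field, hd0]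
    rw [hslope] at ht
    have := mul_pos ht (show (0:ℝ) < t from ht')
    rwa [div_mul_cancel₀ _ (ne_of_gt ht')] at this
  have hall : ∀ᶠ t in 𝓝[>] (0:ℝ), 0 < deriv g t ∧ t ∈ s ∧ g t ≤ g 0 := by
    filter_upwards [hev',
      mem_nhdsWithin_of_mem_nhds (hs.mem_nhds h0),
      mem_nhdsWithin_of_mem_nhds hmax] with t h1 h2 h3
    exact ⟨h1, h2, h3⟩
  rw [Filter.eventually_iff, mem_nhdsGT_iff_exists_Ioo_subset] at hall
  obtain ⟨b, hb, hsub⟩ := hall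
  have hb0 : (0:ℝ) < b := hb
  have hcb : b/2 ∈ Ioo (0:ℝ) b := ⟨by positivity, half_lt_self hb0⟩
  have hIccs : Icc (0:ℝ) (b/2) ⊆ s := by
    intro x hx
    rcases eq_or_lt_of_le hx.1 with h | h
    · exact h ▸ h0
    · exact (hsub ⟨h, lt_of_le_of_lt hx.2 (half_lt_self hb0)⟩).2.1
  have hmono : StrictMonoOn g (Icc (0:ℝ) (b/2)) := by
    apply strictMonoOn_of_deriv_pos (convex_Icc _ _)
    · exact hg.continuousOn.mono hIccs
    · intro x hx
      rw [interior_Icc] at hx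
      exact (hsub ⟨hx.1, hx.2.trans (half_lt_self hb0)⟩).1
  have h1 : g 0 < g (b/2) :=
    hmono (left_mem_Icc.mpr (by positivity)) ⟨le_of_lt hcb.1, le_refl _⟩ hcb.1
  have h2 : g (b/2) ≤ g 0 := (hsub hcb).2.2
  linarith


/-- Directional second partials are differentiable for C² functions. -/
lemma hj_diff {n : ℕ} {w : (Fin n → ℝ) → ℝ} {U : Set (Fin n → ℝ)}
    (hU : IsOpen U) (hw : ContDiffOn ℝ 2 w U) {x : Fin n → ℝ} (hx : x ∈ U)
    (e : Fin n → ℝ) : DifferentiableAt ℝ (fun y => fderiv ℝ w y e) x := by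
  have hF : ContDiffAt ℝ 1 (fderiv ℝ w) x :=
    (hw.contDiffAt (hU.mem_nhds hx)).fderiv_right (by norm_num)
  exact (hF.differentiableAt one_ne_zero).clm_apply (differentiableAt_const _)

lemma quadform_nonpos_of_isLocalMax {n : ℕ} {w : (Fin n → ℝ) → ℝ} {U : Set (Fin n → ℝ)}
    (hU : IsOpen U) {x0 : Fin n → ℝ} (hx0 : x0 ∈ U) (hw : ContDiffOn ℝ 2 w U)
    (hmax : IsLocalMax w x0) (v : Fin n → ℝ) :
    v ⬝ᵥ (hess w x0 *ᵥ v) ≤ 0 := by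
  set L : ℝ → (Fin n → ℝ) := fun t => x0 + t • v with hLdef
  have hL0 : L 0 = x0 := by simp [hLdef]
  have hLd : ∀ t : ℝ, HasDerivAt L v t := by
    intro t
    simpa [hLdef] using ((hasDerivAt_id t).smul_const v).const_add x0
  have hLc : ContDiff ℝ 2 L := by
    apply contDiff_const.add
    exact contDiff_id.smul contDiff_const
  set s : Set ℝ := L ⁻¹' U with hsdef
  have hso : IsOpen s := hU.preimage hLc.continuous
  have h0s : (0:ℝ) ∈ s := by simp [hsdef, hL0, hx0]
  set g : ℝ → ℝ := w ∘ L with hgdef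
  have hgC : ContDiffOn ℝ 2 g s :=
    hw.comp hLc.contDiffOn (fun t ht => ht)
  have hgmax : IsLocalMax g 0 := by
    have hLt : Tendsto L (𝓝 0) (𝓝 x0) := hL0 ▸ hLc.continuous.continuousAt
    have : ∀ᶠ t in 𝓝 (0:ℝ), w (L t) ≤ w x0 := hLt.eventually hmax
    simpa [hgdef, IsLocalMax, IsMaxFilter, hL0] using this
  have key := deriv2_nonpos_of_isLocalMax hso h0s hgC hgmax
  -- compute deriv g on s
  have hgd : ∀ t ∈ s, HasDerivAt g (fderiv ℝ w (L t) v) t := by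
    intro t ht
    exact (((hw.contDiffAt (hU.mem_nhds ht)).differentiableAt
      (by norm_num)).hasFDerivAt).comp_hasDerivAt t (hLd t)
  have hev : deriv g =ᶠ[𝓝 (0:ℝ)] fun t => fderiv ℝ w (L t) v := by
    filter_upwards [hso.mem_nhds h0s] with t ht
    exact (hgd t ht).deriv
  -- derivative of t ↦ fderiv w (L t) v at 0
  have hinner : ∀ t : ℝ, fderiv ℝ w (L t) v
      = ∑ j, v j * fderiv ℝ w (L t) (Pi.single j 1) := fun t => clm_apply_eq_sum _ v
  have hterm : ∀ j : Fin n, HasDerivAt (fun t => fderiv ℝ w (L t) (Pi.single j 1))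
      (fderiv ℝ (fun y => fderiv ℝ w y (Pi.single j 1)) x0 v) 0 := by
    intro j
    have hd := (hj_diff hU hw hx0 (Pi.single j 1)).hasFDerivAt
    rw [← hL0] at hd
    have h2 := hd.comp_hasDerivAt 0 (hLd 0)
    rw [hL0] at h2
    exact h2
  have hsum : HasDerivAt (fun t => fderiv ℝ w (L t) v)
      (∑ j, v j * fderiv ℝ (fun y => fderiv ℝ w y (Pi.single j 1)) x0 v) 0 := by
    have : HasDerivAt (fun t => ∑ j, v j * fderiv ℝ w (L t) (Pi.single j 1))
        (∑ j, v j * fderiv ℝ (fun y => fderiv ℝ w y (Pi.single j 1)) x0 v) 0 :=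
      HasDerivAt.fun_sum (fun j _ => (hterm j).const_mul (v j))
    simpa [← hinner] using this
  have hD : deriv (deriv g) 0
      = ∑ j, v j * fderiv ℝ (fun y => fderiv ℝ w y (Pi.single j 1)) x0 v := by
    rw [hev.deriv_eq, hsum.deriv]
  have hquad : v ⬝ᵥ (hess w x0 *ᵥ v) = deriv (deriv g) 0 := by
    rw [hD]
    have : ∀ j, fderiv ℝ (fun y => fderiv ℝ w y (Pi.single j 1)) x0 v
        = ∑ i, v i * hess w x0 i j := fun j => clm_apply_eq_sum _ v
    simp only [this, dotProduct, mulVec, Finset.mul_sum]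
    rw [Finset.sum_comm]
    apply Finset.sum_congr rfl
    intro j _
    apply Finset.sum_congr rfl
    intro i _
    ring
  rw [hquad]
  exact key

/-- Trace of (negative-semidefinite quadratic form) times PSD matrix is nonpositive. -/
lemma trace_mul_nonpos {n : ℕ} {H S : Matrix (Fin n) (Fin n) ℝ}
    (hH : ∀ v : Fin n → ℝ, v ⬝ᵥ (H *ᵥ v) ≤ 0) (hS : S.PosSemidef) :
    (H * S).trace ≤ 0 := by
  open scoped MatrixOrder in
  obtain ⟨B, rfl⟩ := CStarAlgebra.nonneg_iff_eq_star_mul_self.mp hS.nonneg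
  rw [← Matrix.mul_assoc, Matrix.trace_mul_cycle]
  have hdiag : ∀ i : Fin n, (B * H * Bᴴ) i i ≤ 0 := by
    intro i
    have h := hH (fun j => B i j)
    calc (B * H * Bᴴ) i i = (fun j => B i j) ⬝ᵥ (H *ᵥ (fun j => B i j)) := by
          simp only [Matrix.mul_apply, Matrix.conjTranspose_apply, dotProduct, mulVec,
            dotProduct, star_trivial, Finset.sum_mul, Finset.mul_sum]
          rw [Finset.sum_comm]
          apply Finset.sum_congr rfl; intro j _
          apply Finset.sum_congr rfl; intro k _
          ring
      _ ≤ 0 := h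
  exact Finset.sum_nonpos (fun i _ => hdiag i)

/-- Theorem 5 (classical-solution version): a classical supersolution of the relaxed
linear HJB PDE that lies above the exact solution on the boundary is a pointwise upper
bound of the exact solution on all of `Ω`. -/
theorem hjb_supersolution_pointwise_upper_bound
    {n : ℕ} (Ω : Set (Fin n → ℝ)) (hΩ : IsCompact Ω)
    (f : (Fin n → ℝ) → Fin n → ℝ) (q : (Fin n → ℝ) → ℝ)
    (Sig : (Fin n → ℝ) → Matrix (Fin n) (Fin n) ℝ)
    (hq : ∀ x ∈ Ω, 0 < q x)
    (hSig : ∀ x ∈ Ω, (Sig x).PosSemidef)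
    (lam : ℝ) (hlam : 0 < lam)
    (Ψstar Ψu : (Fin n → ℝ) → ℝ)
    (hΨstar : ∃ U : Set (Fin n → ℝ), IsOpen U ∧ Ω ⊆ U ∧ ContDiffOn ℝ 2 Ψstar U)
    (hΨu : ∃ U : Set (Fin n → ℝ), IsOpen U ∧ Ω ⊆ U ∧ ContDiffOn ℝ 2 Ψu U)
    (hpde : ∀ x ∈ interior Ω,
      (1 / lam) * q x * Ψstar x - hjbL f Sig Ψstar x = 0)
    (hsuper : ∀ x ∈ interior Ω,
      0 ≤ (1 / lam) * q x * Ψu x - hjbL f Sig Ψu x)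
    (hbdry : ∀ x ∈ frontier Ω, Ψstar x ≤ Ψu x) :
    ∀ x ∈ Ω, Ψstar x ≤ Ψu x := by
  intro x hx
  obtain ⟨U1, hU1o, hU1s, hC1⟩ := hΨstar
  obtain ⟨U2, hU2o, hU2s, hC2⟩ := hΨu
  set U : Set (Fin n → ℝ) := U1 ∩ U2 with hUdef
  have hUo : IsOpen U := hU1o.inter hU2o
  have hΩU : Ω ⊆ U := Set.subset_inter hU1s hU2s
  set w : (Fin n → ℝ) → ℝ := fun y => Ψstar y - Ψu y with hwdef
  have hwC : ContDiffOn ℝ 2 w U :=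
    (hC1.mono Set.inter_subset_left).sub (hC2.mono Set.inter_subset_right)
  have hwcont : ContinuousOn w Ω := hwC.continuousOn.mono hΩU
  obtain ⟨x0, hx0Ω, hx0max⟩ := hΩ.exists_isMaxOn ⟨x, hx⟩ hwcont
  suffices h : w x0 ≤ 0 by
    have hxw : w x ≤ w x0 := hx0max hx
    simp only [hwdef] at hxw h
    linarith
  by_cases hint : x0 ∈ interior Ω
  · -- interior maximum: use the PDE
    have hx0U : x0 ∈ U := hΩU hx0Ω
    have hmaxloc : IsLocalMax w x0 := by
      have hnhds : Ω ∈ 𝓝 x0 := mem_interior_iff_mem_nhds.mp hint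
      exact Filter.eventually_of_mem hnhds (fun y hy => hx0max hy)
    -- gradient vanishes
    have hfd : fderiv ℝ w x0 = 0 := hmaxloc.fderiv_eq_zero
    have hgradw : grad w x0 = 0 := by
      funext i
      simp [grad, hfd]
    -- Hessian quadratic form nonpositive
    have hquad : ∀ v : Fin n → ℝ, v ⬝ᵥ (hess w x0 *ᵥ v) ≤ 0 :=
      fun v => quadform_nonpos_of_isLocalMax hUo hx0U hwC hmaxloc v
    have htr : (hess w x0 * Sig x0).trace ≤ 0 := trace_mul_nonpos hquad (hSig x0 hx0Ω)
    have hLw : hjbL f Sig w x0 ≤ 0 := by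
      simp only [hjbL, hgradw, dotProduct_zero, zero_add]
      linarith
    -- linearity of the operator at x0
    have hd1 : DifferentiableAt ℝ Ψstar x0 :=
      (hC1.contDiffAt (hU1o.mem_nhds hx0U.1)).differentiableAt (by norm_num)
    have hd2 : DifferentiableAt ℝ Ψu x0 :=
      (hC2.contDiffAt (hU2o.mem_nhds hx0U.2)).differentiableAt (by norm_num)
    have hgrad_sub : grad w x0 = grad Ψstar x0 - grad Ψu x0 := by
      funext i
      simp [grad, hwdef, fderiv_fun_sub hd1 hd2]
    have hhess_sub : hess w x0 = hess Ψstar x0 - hess Ψu x0 := by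
      ext i j
      have hev : (fun y => fderiv ℝ w y (Pi.single j 1)) =ᶠ[𝓝 x0]
          (fun y => fderiv ℝ Ψstar y (Pi.single j 1) - fderiv ℝ Ψu y (Pi.single j 1)) := by
        filter_upwards [hUo.mem_nhds hx0U] with y hy
        have hd1' : DifferentiableAt ℝ Ψstar y :=
          (hC1.contDiffAt (hU1o.mem_nhds hy.1)).differentiableAt (by norm_num)
        have hd2' : DifferentiableAt ℝ Ψu y :=
          (hC2.contDiffAt (hU2o.mem_nhds hy.2)).differentiableAt (by norm_num)
        simp [hwdef, fderiv_fun_sub hd1' hd2']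
      have h1 : DifferentiableAt ℝ (fun y => fderiv ℝ Ψstar y (Pi.single j 1)) x0 :=
        hj_diff hU1o hC1 hx0U.1 _
      have h2 : DifferentiableAt ℝ (fun y => fderiv ℝ Ψu y (Pi.single j 1)) x0 :=
        hj_diff hU2o hC2 hx0U.2 _
      simp only [hess, Matrix.sub_apply, Matrix.of_apply]
      rw [hev.fderiv_eq, fderiv_fun_sub h1 h2]
      simp
    have hLlin : hjbL f Sig w x0 = hjbL f Sig Ψstar x0 - hjbL f Sig Ψu x0 := by
      simp only [hjbL, hgrad_sub, hhess_sub, Matrix.sub_mul, Matrix.trace_sub,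
        dotProduct_sub]
      ring
    have hp := hpde x0 hint
    have hs := hsuper x0 hint
    have hkey : (1 / lam) * q x0 * w x0 ≤ 0 := by
      simp only [hwdef]
      have : (1/lam) * q x0 * (Ψstar x0 - Ψu x0)
          = ((1/lam) * q x0 * Ψstar x0 - hjbL f Sig Ψstar x0)
            - ((1/lam) * q x0 * Ψu x0 - hjbL f Sig Ψu x0)
            + hjbL f Sig w x0 := by
        rw [hLlin]; ring
      rw [this, hp]
      linarith
    have hqpos : 0 < (1 / lam) * q x0 :=
      mul_pos (by positivity) (hq x0 hx0Ω)
    by_contra hpos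
    push_neg at hpos
    nlinarith [mul_pos hqpos hpos]
  · -- maximum on the frontier
    have hfront : x0 ∈ frontier Ω := by
      rw [hΩ.isClosed.frontier_eq]
      exact ⟨hx0Ω, hint⟩
    have := hbdry x0 hfront
    simp only [hwdef]
    linarith
end

section
/- Let Ω be a set, λ > 0, and Ψ_l, Ψ* : Ω → ℝ with 0 < Ψ_l(x) ≤ Ψ*(x) and Ψ*(x) − Ψ_l(x) ≤ ε for all x ∈ Ω, where ε ≥ 0. Let M ≥ 0 satisfy |−λ log Ψ*(x)| ≤ M for all x ∈ Ω, set η = e^{−M/λ}, and assume ε < η. Define V_u = −λ log Ψ_l and V* = −λ log Ψ*. Then for all x ∈ Ω: 0 ≤ V_u(x) − V*(x) ≤ −λ log(1 − ε/η). (Theorem 6: the suboptimal value function V_u is an upper bound of the optimal cost V* with explicit pointwise error bound.) -/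
/-- Theorem 6: the suboptimal value function `V_u = -λ log Ψ_l` is a pointwise upper
bound of the optimal cost `V* = -λ log Ψ*` with explicit error bound
`-λ log(1 - ε/η)`, where `η = e^{-M/λ}` and `M` bounds `‖V*‖_∞`. -/
theorem suboptimal_value_function_error_bound
    {Ω : Type*} (lam : ℝ) (hlam : 0 < lam)
    (ε : ℝ) (hε : 0 ≤ ε)
    (Ψl Ψstar : Ω → ℝ)
    (hpos : ∀ x, 0 < Ψl x)
    (hls : ∀ x, Ψl x ≤ Ψstar x)
    (hgap : ∀ x, Ψstar x - Ψl x ≤ ε)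
    (M : ℝ) (hM : 0 ≤ M)
    (hbound : ∀ x, |(-lam) * Real.log (Ψstar x)| ≤ M)
    (η : ℝ) (hη : η = Real.exp (-M / lam))
    (hεη : ε < η)
    (Vu Vstar : Ω → ℝ)
    (hVu : Vu = fun x => -lam * Real.log (Ψl x))
    (hVstar : Vstar = fun x => -lam * Real.log (Ψstar x)) :
    ∀ x, 0 ≤ Vu x - Vstar x ∧ Vu x - Vstar x ≤ -lam * Real.log (1 - ε / η) := by
  intro x
  subst hVu hVstar hη
  have hηpos : (0:ℝ) < Real.exp (-M / lam) := Real.exp_pos _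
  have hΨl := hpos x
  have hΨs : 0 < Ψstar x := lt_of_lt_of_le hΨl (hls x)
  -- Ψstar x ≥ η
  have hlog : -M / lam ≤ Real.log (Ψstar x) := by
    have h := (abs_le.mp (hbound x)).2
    have : -lam * Real.log (Ψstar x) ≤ M := h
    have hlam' : lam ≠ 0 := ne_of_gt hlam
    rw [div_le_iff₀ hlam] at *
    nlinarith
  have hηle : Real.exp (-M / lam) ≤ Ψstar x := by
    calc Real.exp (-M / lam) ≤ Real.exp (Real.log (Ψstar x)) := Real.exp_le_exp.mpr hlog
    _ = Ψstar x := Real.exp_log hΨs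
  set η := Real.exp (-M / lam)
  have hratio : 1 - ε / η ≤ Ψl x / Ψstar x := by
    rw [le_div_iff₀ hΨs]
    have : ε / η * Ψstar x ≥ ε := by
      rw [ge_iff_le, div_mul_eq_mul_div, le_div_iff₀ hηpos]
      nlinarith
    nlinarith [hgap x]
  have hratio_pos : 0 < 1 - ε / η := by
    have : ε / η < 1 := (div_lt_one hηpos).mpr hεη
    linarith
  have hdiff : -lam * Real.log (Ψl x) - -lam * Real.log (Ψstar x)
      = -lam * Real.log (Ψl x / Ψstar x) := by
    rw [Real.log_div (ne_of_gt hΨl) (ne_of_gt hΨs)]; ring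
  constructor
  · simp only [hdiff]
    have : Real.log (Ψl x / Ψstar x) ≤ 0 := by
      apply Real.log_nonpos
      · positivity
      · exact (div_le_one hΨs).mpr (hls x)
    nlinarith
  · simp only [hdiff]
    have hloglog : Real.log (1 - ε / η) ≤ Real.log (Ψl x / Ψstar x) :=
      Real.log_le_log hratio_pos hratio
    nlinarith
end

section
/- Let Ω be a set, λ > 0, and Ψ_l, Ψ* : Ω → ℝ with 0 < Ψ_l(x) ≤ Ψ*(x) and Ψ*(x) − Ψ_l(x) ≤ ε′ for all x ∈ Ω. Let M ≥ 0 satisfy |−λ log Ψ*(x)| ≤ M for all x ∈ Ω and set η = e^{−M/λ}. Suppose ε′ ≤ ε < η. Then for all x ∈ Ω: 0 ≤ (−λ log Ψ_l(x)) − (−λ log Ψ*(x)) ≤ −λ log(1 − ε/η). (Corollary 2: if the degree-(d+1) relaxation error ε′ = ε^{d+1} satisfies ε^{d+1} ≤ ε^{d} = ε, then the value-function error at degree d+1 is bounded by −λ log(1 − ε^{d}/η).) -/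
/-- Corollary 2: if the degree-(d+1) relaxation error `ε′` satisfies `ε′ ≤ ε < η`, then
the value-function error at degree `d+1` is still bounded by `-λ log(1 - ε/η)`. -/
theorem value_function_error_bound_nonincreasing
    {Ω : Type*} (lam : ℝ) (hlam : 0 < lam)
    (ε' ε : ℝ)
    (Ψl Ψstar : Ω → ℝ)
    (hpos : ∀ x, 0 < Ψl x)
    (hls : ∀ x, Ψl x ≤ Ψstar x)
    (hgap : ∀ x, Ψstar x - Ψl x ≤ ε')
    (M : ℝ) (hM : 0 ≤ M)
    (hbound : ∀ x, |(-lam) * Real.log (Ψstar x)| ≤ M)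
    (η : ℝ) (hη : η = Real.exp (-M / lam))
    (hε'ε : ε' ≤ ε) (hεη : ε < η) :
    ∀ x, 0 ≤ (-lam * Real.log (Ψl x)) - (-lam * Real.log (Ψstar x)) ∧
      (-lam * Real.log (Ψl x)) - (-lam * Real.log (Ψstar x)) ≤
        -lam * Real.log (1 - ε / η) := by
  intro x
  have hηpos : 0 < η := hη ▸ Real.exp_pos _
  have hεnn : 0 ≤ ε := by linarith [hgap x, hls x]
  have hlpos := hpos x
  have hspos : 0 < Ψstar x := lt_of_lt_of_le hlpos (hls x)
  -- Ψstar x ≥ η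
  have hlogbd : -M ≤ lam * Real.log (Ψstar x) := by
    have := abs_le.mp (hbound x)
    linarith [this.1]
  have hsη : η ≤ Ψstar x := by
    rw [hη]
    have : -M / lam ≤ Real.log (Ψstar x) := by
      rw [div_le_iff₀ hlam] at *
      nlinarith
    calc Real.exp (-M / lam) ≤ Real.exp (Real.log (Ψstar x)) := Real.exp_le_exp.mpr this
      _ = Ψstar x := Real.exp_log hspos
  -- Ψl x ≥ Ψstar x * (1 - ε/η)
  have hkey : Ψstar x * (1 - ε / η) ≤ Ψl x := by
    have h1 : Ψstar x - Ψl x ≤ ε := le_trans (hgap x) hε'ε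
    have h2 : ε / η * η ≤ ε / η * Ψstar x :=
      mul_le_mul_of_nonneg_left hsη (div_nonneg hεnn hηpos.le)
    have h3 : ε / η * η = ε := div_mul_cancel₀ ε hηpos.ne'
    nlinarith
  have h1mε : 0 < 1 - ε / η := by
    have : ε / η < 1 := (div_lt_one hηpos).mpr hεη
    linarith
  have hlog1 : Real.log (Ψl x) ≤ Real.log (Ψstar x) := Real.log_le_log hlpos (hls x)
  have hlog2 : Real.log (Ψstar x) + Real.log (1 - ε / η) ≤ Real.log (Ψl x) := by
    have := Real.log_le_log (by positivity) hkey
    rwa [Real.log_mul hspos.ne' h1mε.ne'] at this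
  constructor
  · nlinarith
  · nlinarith
end

section
/- Let λ > 0, let x ∈ ℝⁿ, and let Ψ : ℝⁿ → ℝ be twice continuously differentiable and positive on a neighborhood of x. Let q ∈ ℝ, f ∈ ℝⁿ, G ∈ ℝ^{n×m}, B ∈ ℝ^{n×l}, let R ∈ ℝ^{m×m} be symmetric positive definite and Σ_ε ∈ ℝ^{l×l} symmetric positive semidefinite, and assume the linearly-solvable compatibility condition λ·G R⁻¹ Gᵀ = B Σ_ε Bᵀ =: Σ. If 0 = −(1/λ)·q·Ψ(x) + fᵀ∇Ψ(x) + (1/2)Tr(∇²Ψ(x)·Σ), then V = −λ log Ψ satisfies the nonlinear HJB equation at x: 0 = q + ∇V(x)ᵀf − (1/2)∇V(x)ᵀ G R⁻¹ Gᵀ ∇V(x) + (1/2)Tr(∇²V(x)·B Σ_ε Bᵀ). (The logarithmic transformation converts the linear PDE (10) into the nonlinear HJB PDE (6) under condition (7).) -/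
open Matrix

lemma trace_vecMulVec_mul {n : ℕ} (g : Fin n → ℝ) (S : Matrix (Fin n) (Fin n) ℝ) :
    (vecMulVec g g * S).trace = g ⬝ᵥ S.mulVec g := by
  simp only [Matrix.trace, Matrix.diag, Matrix.mul_apply, Matrix.vecMulVec_apply,
    dotProduct, Matrix.mulVec, Finset.mul_sum]
  rw [Finset.sum_comm]
  exact Finset.sum_congr rfl fun i _ => Finset.sum_congr rfl fun j _ => by ring

/-- The logarithmic transformation `V = -λ log Ψ` converts the linear HJB PDE into the
nonlinear HJB PDE under the linearly-solvable condition `λ G R⁻¹ Gᵀ = B Σ_ε Bᵀ`. -/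
theorem log_transform_linear_to_nonlinear_hjb
    {n m l : ℕ} (lam : ℝ) (hlam : 0 < lam)
    (x : Fin n → ℝ) (Ψ : (Fin n → ℝ) → ℝ)
    (U : Set (Fin n → ℝ)) (hU : IsOpen U) (hxU : x ∈ U)
    (hC2 : ContDiffOn ℝ 2 Ψ U) (hpos : ∀ y ∈ U, 0 < Ψ y)
    (q : ℝ) (f : Fin n → ℝ)
    (G : Matrix (Fin n) (Fin m) ℝ) (B : Matrix (Fin n) (Fin l) ℝ)
    (R : Matrix (Fin m) (Fin m) ℝ) (hR : R.PosDef)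
    (Se : Matrix (Fin l) (Fin l) ℝ) (hSe : Se.PosSemidef)
    (Sig : Matrix (Fin n) (Fin n) ℝ)
    (hSig : Sig = B * Se * Bᵀ)
    (hcompat : lam • (G * R⁻¹ * Gᵀ) = B * Se * Bᵀ)
    (hlin : 0 = -(1 / lam) * q * Ψ x + f ⬝ᵥ grad Ψ x
      + (1 / 2) * (hess Ψ x * Sig).trace)
    (V : (Fin n → ℝ) → ℝ) (hV : V = fun y => -lam * Real.log (Ψ y)) :
    0 = q + grad V x ⬝ᵥ f
      - (1 / 2) * (grad V x ⬝ᵥ (G * R⁻¹ * Gᵀ).mulVec (grad V x))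
      + (1 / 2) * (hess V x * (B * Se * Bᵀ)).trace := by
  subst hV hSig
  have hpx : 0 < Ψ x := hpos x hxU
  have hne : Ψ x ≠ 0 := ne_of_gt hpx
  have hlamne : lam ≠ 0 := ne_of_gt hlam
  have hΨdiff : ∀ y ∈ U, DifferentiableAt ℝ Ψ y := fun y hy =>
    (hC2.differentiableOn (by norm_num)).differentiableAt (hU.mem_nhds hy)
  -- derivative of V on U
  have hVd : ∀ y ∈ U, HasFDerivAt (fun z => -lam * Real.log (Ψ z))
      ((-lam * (Ψ y)⁻¹) • fderiv ℝ Ψ y) y := by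
    intro y hy
    have := (((hΨdiff y hy).hasFDerivAt).log (ne_of_gt (hpos y hy))).const_mul (-lam)
    rw [← smul_smul]
    exact this
  -- gradient of V
  have hgradV : grad (fun z => -lam * Real.log (Ψ z)) x
      = (-(lam / Ψ x)) • grad Ψ x := by
    funext i
    simp only [grad, (hVd x hxU).fderiv, ContinuousLinearMap.coe_smul', Pi.smul_apply,
      smul_eq_mul, Pi.smul_apply]
    field_simp
  -- second derivative pieces
  have hfd1 : DifferentiableAt ℝ (fun y => fderiv ℝ Ψ y) x :=
    ((hC2.fderiv_of_isOpen (m := 1) hU (by norm_num)).differentiableOn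
      (by norm_num)).differentiableAt (hU.mem_nhds hxU)
  have hgj : ∀ j, HasFDerivAt (fun y => fderiv ℝ Ψ y (Pi.single j 1))
      (fderiv ℝ (fun y => fderiv ℝ Ψ y (Pi.single j 1)) x) x := by
    intro j
    exact (hfd1.clm_apply (differentiableAt_const _)).hasFDerivAt
  -- Hessian of V
  have hhessV : ∀ i j, hess (fun z => -lam * Real.log (Ψ z)) x i j
      = -(lam / Ψ x) * hess Ψ x i j
        + lam / (Ψ x) ^ 2 * (grad Ψ x i * grad Ψ x j) := by
    intro i j
    have heq : (fun y => fderiv ℝ (fun z => -lam * Real.log (Ψ z)) y (Pi.single j 1))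
        =ᶠ[nhds x] fun y => -lam * ((Ψ y)⁻¹ * fderiv ℝ Ψ y (Pi.single j 1)) := by
      filter_upwards [hU.mem_nhds hxU] with y hy
      rw [(hVd y hy).fderiv]
      simp [mul_assoc]
    have hinv : HasFDerivAt (fun y => (Ψ y)⁻¹)
        ((-(Ψ x ^ 2)⁻¹) • fderiv ℝ Ψ x) x :=
      (hasDerivAt_inv hne).comp_hasFDerivAt x (hΨdiff x hxU).hasFDerivAt
    have hprod := (hinv.mul (hgj j)).const_mul (-lam)
    have hder : fderiv ℝ (fun y => -lam * ((Ψ y)⁻¹ * fderiv ℝ Ψ y (Pi.single j 1))) x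
        = (-lam) • ((Ψ x)⁻¹ • fderiv ℝ (fun y => fderiv ℝ Ψ y (Pi.single j 1)) x
            + fderiv ℝ Ψ x (Pi.single j 1) • (-(Ψ x ^ 2)⁻¹) • fderiv ℝ Ψ x) :=
      hprod.fderiv
    rw [hess, Matrix.of_apply, heq.fderiv_eq, hder]
    simp only [ContinuousLinearMap.coe_smul', Pi.smul_apply, ContinuousLinearMap.add_apply,
      smul_eq_mul, hess, Matrix.of_apply, grad]
    field_simp
    ring
  -- abbreviations
  set g := grad Ψ x with hg
  set H := hess Ψ x with hH
  set A := G * R⁻¹ * Gᵀ with hA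
  set S := B * Se * Bᵀ with hS
  have hhessVmat : hess (fun z => -lam * Real.log (Ψ z)) x
      = (-(lam / Ψ x)) • H + (lam / (Ψ x) ^ 2) • vecMulVec g g := by
    ext i j
    simp only [Matrix.add_apply, Matrix.smul_apply, Matrix.vecMulVec_apply, smul_eq_mul]
    rw [hhessV i j]
  rw [hgradV, hhessVmat]
  -- expand
  have key : lam * (g ⬝ᵥ A.mulVec g) = g ⬝ᵥ S.mulVec g := by
    rw [← hcompat]
    simp [smul_mulVec]
  simp only [Matrix.add_mul, Matrix.trace_add, Matrix.smul_mul, Matrix.trace_smul,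
    trace_vecMulVec_mul, smul_dotProduct, Matrix.mulVec_smul, dotProduct_smul, smul_eq_mul]
  have hdc : f ⬝ᵥ g = g ⬝ᵥ f := dotProduct_comm f g
  rw [hdc] at hlin
  rw [← key]
  have hq : q * Ψ x = lam * (g ⬝ᵥ f) + lam / 2 * (H * S).trace := by
    field_simp at hlin
    linarith
  field_simp
  linear_combination (-2 * Ψ x) * hq
end

section
/- Let λ > 0, let x ∈ ℝⁿ, and let Ψ : ℝⁿ → ℝ be twice continuously differentiable and positive on a neighborhood of x. Let q ≥ 0 be a real number, f ∈ ℝⁿ, G ∈ ℝ^{n×m}, B ∈ ℝ^{n×l}, let R ∈ ℝ^{m×m} be symmetric positive definite and Σ_ε ∈ ℝ^{l×l} symmetric positive semidefinite, and assume λ·G R⁻¹ Gᵀ = B Σ_ε Bᵀ =: Σ (so Σ is positive semidefinite). Suppose the relaxed linear HJB inequality holds at x: (1/λ)·q·Ψ(x) − fᵀ∇Ψ(x) − (1/2)Tr(∇²Ψ(x)·Σ) ≤ 0. Define V = −λ log Ψ and u = −R⁻¹Gᵀ∇V(x). Then ∇V(x)ᵀ(f + Gu) + (1/2)Tr(∇²V(x)·B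 Σ_ε Bᵀ) ≤ −q − (λ/(2Ψ(x)²))·∇Ψ(x)ᵀ Σ ∇Ψ(x) ≤ 0. (Key inequality in the proof of Theorem 7 that V_u = −λ log Ψ_l is a stochastic control Lyapunov function: the generator of V along the controlled dynamics is nonpositive.) -/
open Matrix

/-- Key inequality in the proof of Theorem 7: under the relaxed linear HJB inequality,
the generator of `V = -λ log Ψ` along the dynamics controlled by `u = -R⁻¹Gᵀ∇V(x)`
is bounded above by `-q - (λ/(2Ψ(x)²)) ∇Ψ(x)ᵀ Σ ∇Ψ(x) ≤ 0`. -/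
theorem generator_of_log_transform_nonpositive
    {n m l : ℕ} (lam : ℝ) (hlam : 0 < lam)
    (x : Fin n → ℝ) (Ψ : (Fin n → ℝ) → ℝ)
    (U : Set (Fin n → ℝ)) (hU : IsOpen U) (hxU : x ∈ U)
    (hC2 : ContDiffOn ℝ 2 Ψ U) (hpos : ∀ y ∈ U, 0 < Ψ y)
    (q : ℝ) (hq : 0 ≤ q) (f : Fin n → ℝ)
    (G : Matrix (Fin n) (Fin m) ℝ) (B : Matrix (Fin n) (Fin l) ℝ)
    (R : Matrix (Fin m) (Fin m) ℝ) (hR : R.PosDef)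
    (Se : Matrix (Fin l) (Fin l) ℝ) (hSe : Se.PosSemidef)
    (Sig : Matrix (Fin n) (Fin n) ℝ)
    (hSig : Sig = B * Se * Bᵀ)
    (hcompat : lam • (G * R⁻¹ * Gᵀ) = B * Se * Bᵀ)
    (hrelax : (1 / lam) * q * Ψ x - f ⬝ᵥ grad Ψ x
      - (1 / 2) * (hess Ψ x * Sig).trace ≤ 0)
    (V : (Fin n → ℝ) → ℝ) (hV : V = fun y => -lam * Real.log (Ψ y))
    (u : Fin m → ℝ) (hu : u = -((R⁻¹ * Gᵀ).mulVec (grad V x))) :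
    grad V x ⬝ᵥ (f + G.mulVec u)
        + (1 / 2) * (hess V x * (B * Se * Bᵀ)).trace ≤
      -q - (lam / (2 * Ψ x ^ 2)) * (grad Ψ x ⬝ᵥ Sig.mulVec (grad Ψ x)) ∧
    -q - (lam / (2 * Ψ x ^ 2)) * (grad Ψ x ⬝ᵥ Sig.mulVec (grad Ψ x)) ≤ 0 := by
  have hcx : 0 < Ψ x := hpos x hxU
  have hcne : Ψ x ≠ 0 := ne_of_gt hcx
  have hnx : U ∈ nhds x := hU.mem_nhds hxU
  have hdiff : ∀ y ∈ U, DifferentiableAt ℝ Ψ y := fun y hy =>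
    (hC2.contDiffAt (hU.mem_nhds hy)).differentiableAt two_ne_zero
  set p := grad Ψ x with hp
  -- derivative of V on U
  have hVder : ∀ y ∈ U, HasFDerivAt V ((-lam * (Ψ y)⁻¹) • fderiv ℝ Ψ y) y := by
    intro y hy
    have h1 := ((hdiff y hy).hasFDerivAt.log (ne_of_gt (hpos y hy))).const_mul (-lam)
    rw [hV]
    rw [smul_smul] at h1
    exact h1
  -- gradient of V at x
  have hgV : grad V x = (-(lam * (Ψ x)⁻¹)) • p := by
    funext i
    have h2 := (hVder x hxU).fderiv
    show fderiv ℝ V x (Pi.single i 1) = _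
    rw [h2]
    simp [hp, grad]
  -- Hessian of V at x
  have hhV : ∀ i j, hess V x i j =
      lam * ((Ψ x)⁻¹)^2 * (p i * p j) - lam * (Ψ x)⁻¹ * hess Ψ x i j := by
    intro i j
    have hEv : (fun y => fderiv ℝ V y (Pi.single j 1)) =ᶠ[nhds x]
        (fun y => -lam * ((Ψ y)⁻¹ * fderiv ℝ Ψ y (Pi.single j 1))) := by
      filter_upwards [hnx] with y hy
      rw [(hVder y hy).fderiv]
      simp [mul_assoc]
    have hdf : DifferentiableAt ℝ (fderiv ℝ Ψ) x :=
      ((hC2.contDiffAt hnx).fderiv_right (by norm_num)).differentiableAt one_ne_zero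
    have hgj : DifferentiableAt ℝ (fun y => fderiv ℝ Ψ y (Pi.single j 1)) x :=
      hdf.clm_apply (differentiableAt_const _)
    have hinv : HasFDerivAt (fun y => (Ψ y)⁻¹)
        ((-(Ψ x ^ 2)⁻¹) • fderiv ℝ Ψ x) x :=
      (hasDerivAt_inv hcne).comp_hasFDerivAt x (hdiff x hxU).hasFDerivAt
    have hmul := (hinv.mul hgj.hasFDerivAt).const_mul (-lam)
    have heq : hess V x i j
        = fderiv ℝ (fun y => -lam * ((Ψ y)⁻¹ * fderiv ℝ Ψ y (Pi.single j 1))) x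
            (Pi.single i 1) := by
      show fderiv ℝ (fun y => fderiv ℝ V y (Pi.single j 1)) x (Pi.single i 1) = _
      rw [hEv.fderiv_eq]
    rw [heq, show fderiv ℝ (fun y => -lam * ((Ψ y)⁻¹ * fderiv ℝ Ψ y (Pi.single j 1))) x = _ from hmul.fderiv]
    have e1 : fderiv ℝ (fun y => fderiv ℝ Ψ y (Pi.single j 1)) x (Pi.single i 1)
        = hess Ψ x i j := rfl
    have e2 : fderiv ℝ Ψ x (Pi.single j 1) = p j := rfl
    have e3 : fderiv ℝ Ψ x (Pi.single i 1) = p i := rfl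
    simp only [ContinuousLinearMap.smul_apply, ContinuousLinearMap.add_apply,
      smul_eq_mul, e1, e2, e3]
    field_simp
    ring
  -- positive semidefiniteness of Sig
  have hSigP : Sig.PosSemidef := by
    rw [hSig]
    have h := hSe.mul_mul_conjTranspose_same B
    have hB : Bᴴ = Bᵀ := rfl
    rwa [hB] at h
  have hS0 : 0 ≤ p ⬝ᵥ Sig.mulVec p := by simpa using hSigP.dotProduct_mulVec_nonneg p
  -- trace computation
  have htrH : (hess Ψ x * Sig).trace = ∑ i, ∑ j, hess Ψ x i j * Sig j i := by
    simp [Matrix.trace, Matrix.diag, Matrix.mul_apply]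
  have htrV : (hess V x * Sig).trace = ∑ i, ∑ j, hess V x i j * Sig j i := by
    simp [Matrix.trace, Matrix.diag, Matrix.mul_apply]
  have hSalt : p ⬝ᵥ Sig.mulVec p = ∑ i, ∑ j, p i * p j * Sig j i := by
    rw [Finset.sum_comm]
    simp only [dotProduct, Matrix.mulVec, Finset.mul_sum]
    exact Finset.sum_congr rfl fun i _ => Finset.sum_congr rfl fun j _ => by ring
  have htr : (hess V x * (B * Se * Bᵀ)).trace
      = lam * ((Ψ x)⁻¹)^2 * (p ⬝ᵥ Sig.mulVec p)
        - lam * (Ψ x)⁻¹ * (hess Ψ x * Sig).trace := by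
    rw [← hSig, htrV, htrH, hSalt, Finset.mul_sum, Finset.mul_sum,
      ← Finset.sum_sub_distrib]
    refine Finset.sum_congr rfl fun i _ => ?_
    rw [Finset.mul_sum, Finset.mul_sum, ← Finset.sum_sub_distrib]
    refine Finset.sum_congr rfl fun j _ => ?_
    rw [hhV i j]; ring
  -- dot product computation
  have hGRG : G * (R⁻¹ * Gᵀ) = lam⁻¹ • Sig := by
    rw [hSig, ← hcompat, smul_smul, inv_mul_cancel₀ (ne_of_gt hlam), one_smul, Matrix.mul_assoc]
  have hdot : grad V x ⬝ᵥ (f + G.mulVec u)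
      = -(lam * (Ψ x)⁻¹) * (f ⬝ᵥ p)
        - lam * ((Ψ x)⁻¹)^2 * (p ⬝ᵥ Sig.mulVec p) := by
    rw [hu, hgV, Matrix.mulVec_neg, Matrix.mulVec_mulVec, hGRG]
    simp only [dotProduct_add, dotProduct_neg, Matrix.mulVec_smul,
      Matrix.smul_mulVec, smul_dotProduct, dotProduct_smul, smul_eq_mul,
      dotProduct_comm f p]
    field_simp
    ring
  refine ⟨?_, ?_⟩
  · rw [hdot, htr]
    have hkey : lam * (Ψ x)⁻¹ * ((1 / lam) * q * Ψ x - f ⬝ᵥ p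
        - (1 / 2) * (hess Ψ x * Sig).trace) ≤ 0 :=
      mul_nonpos_of_nonneg_of_nonpos (by positivity) hrelax
    have hfin : (-(lam * (Ψ x)⁻¹) * (f ⬝ᵥ p)
          - lam * ((Ψ x)⁻¹)^2 * (p ⬝ᵥ Sig.mulVec p)
          + 1 / 2 * (lam * ((Ψ x)⁻¹)^2 * (p ⬝ᵥ Sig.mulVec p)
            - lam * (Ψ x)⁻¹ * (hess Ψ x * Sig).trace))
        - (-q - lam / (2 * Ψ x ^ 2) * (p ⬝ᵥ Sig.mulVec p))
        = lam * (Ψ x)⁻¹ * ((1 / lam) * q * Ψ x - f ⬝ᵥ p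
            - (1 / 2) * (hess Ψ x * Sig).trace) := by
      field_simp
      ring
    linarith [hkey, hfin]
  · have h1 : 0 ≤ lam / (2 * Ψ x ^ 2) * (p ⬝ᵥ Sig.mulVec p) :=
      mul_nonneg (by positivity) hS0
    linarith
end

section
/- Let p ∈ ℝⁿ and let H ∈ ℝ^{n×n} be a symmetric matrix (playing the roles of the gradient ∇V(x) and Hessian ∇²V(x) of a value function V at a point x). Let q > 0 be a real number, f ∈ ℝⁿ, G ∈ ℝ^{n×m}, B ∈ ℝ^{n×l}, let R ∈ ℝ^{m×m} be symmetric positive definite and Σ_ε ∈ ℝ^{l×l} symmetric positive semidefinite. Suppose the supersolution inequality q + pᵀf − (1/2)pᵀ G R⁻¹ Gᵀ p + (1/2)Tr(H·B Σ_ε Bᵀ) ≤ 0 holds, and suppose Tr(H·B Σ_ε Bᵀ) ≥ 0. Then with u = −R⁻¹Gᵀp, one has pᵀ(f + Gu) ≤ −q < 0. (Key inequality in the proof of Corollary 6: under the trace condition, the stochastic HJB relaxation yields a control Lyapunov function decrease condition for the deterministic system dx = (f + Gu)dt.) -/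
open Matrix

/-- Key inequality in the proof of Corollary 6: if the supersolution inequality of the
stochastic HJB holds at a point and the trace term is nonnegative, then the control
`u = -R⁻¹Gᵀp` yields the strict Lyapunov decrease `pᵀ(f + Gu) ≤ -q < 0` for the
deterministic system. -/
theorem deterministic_lyapunov_decrease_from_stochastic_hjb
    {n m l : ℕ} (p : Fin n → ℝ)
    (H : Matrix (Fin n) (Fin n) ℝ) (hH : H.IsSymm)
    (q : ℝ) (hq : 0 < q) (f : Fin n → ℝ)
    (G : Matrix (Fin n) (Fin m) ℝ) (B : Matrix (Fin n) (Fin l) ℝ)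
    (R : Matrix (Fin m) (Fin m) ℝ) (hR : R.PosDef)
    (Se : Matrix (Fin l) (Fin l) ℝ) (hSe : Se.PosSemidef)
    (hsuper : q + p ⬝ᵥ f - (1 / 2) * (p ⬝ᵥ (G * R⁻¹ * Gᵀ).mulVec p)
      + (1 / 2) * (H * (B * Se * Bᵀ)).trace ≤ 0)
    (htrace : 0 ≤ (H * (B * Se * Bᵀ)).trace)
    (u : Fin m → ℝ) (hu : u = -((R⁻¹ * Gᵀ).mulVec p)) :
    p ⬝ᵥ (f + G.mulVec u) ≤ -q ∧ -q < 0 := by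
  have hA : 0 ≤ p ⬝ᵥ (G * R⁻¹ * Gᵀ).mulVec p := by
    have h : (G * R⁻¹ * Gᵀ).mulVec p = G.mulVec (R⁻¹.mulVec (Gᵀ.mulVec p)) := by
      rw [Matrix.mul_assoc]; simp [Matrix.mulVec_mulVec]
    rw [h, Matrix.dotProduct_mulVec, ← Matrix.mulVec_transpose]
    simpa using hR.inv.posSemidef.dotProduct_mulVec_nonneg (Gᵀ.mulVec p)
  have hkey : p ⬝ᵥ (f + G.mulVec u) = p ⬝ᵥ f - p ⬝ᵥ (G * R⁻¹ * Gᵀ).mulVec p := by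
    subst hu
    rw [dotProduct_add, Matrix.mulVec_neg, Matrix.mulVec_mulVec,
      dotProduct_neg, ← Matrix.mul_assoc]
    ring
  constructor
  · rw [hkey]; linarith
  · linarith
end
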